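/- Let n be a finite-dimensional 2-step nilpotent Lie algebra over a field k of characteristic zero, with center z and a fixed linear complement W, so that n = W ⊕ z and Λ²n = Λ²W ⊕ (W∧z) ⊕ Λ²z. Then every n-invariant element ω ∈ (Λ²n)^n has zero component in Λ²W; that is, (Λ²n)^n ⊆ W∧z ⊕ Λ²z. -/

import Mathlib

open TensorProduct

/-- The adjoint action of a Lie algebra `g` on `g ⊗ g`, determined by
`x · (a ⊗ b) = ⁅x,a⁆ ⊗ b + a ⊗ ⁅x,b⁆`. -/
noncomputable def tAct (k g : Type*) [CommRing k] [LieRing g] [LieAlgebra k g] (x : g) :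
    g ⊗[k] g →ₗ[k] g ⊗[k] g :=
  TensorProduct.map (LieAlgebra.ad k g x) LinearMap.id
    + TensorProduct.map LinearMap.id (LieAlgebra.ad k g x)

/-- For submodules `P Q ⊆ g`, the image of `P ⊗ Q` in `g ⊗ g`. -/
noncomputable def tsub (k g : Type*) [CommRing k] [AddCommGroup g] [Module k g]
    (P Q : Submodule k g) : Submodule k (g ⊗[k] g) :=
  LinearMap.range (TensorProduct.map P.subtype Q.subtype)

lemma mem_tsub_of_range_le {k g : Type*} [Field k] [AddCommGroup g] [Module k g]
    {P Q : Submodule k g} {f h : g →ₗ[k] g} (hf : ∀ a, f a ∈ P) (hh : ∀ a, h a ∈ Q)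
    (t : g ⊗[k] g) : TensorProduct.map f h t ∈ tsub k g P Q := by
  have : TensorProduct.map f h = (TensorProduct.map P.subtype Q.subtype).comp
      (TensorProduct.map (f.codRestrict P hf) (h.codRestrict Q hh)) := by
    rw [← TensorProduct.map_comp]; rfl
  rw [this]
  exact ⟨_, rfl⟩

/-- Naturality of the coefficient map coming from a basis of the second factor. -/
lemma coef_naturality {k g : Type*} [Field k] [AddCommGroup g] [Module k g]
    {ι : Type*} [DecidableEq ι] (b : Module.Basis ι k g) (f : g →ₗ[k] g) (t : g ⊗[k] g) (i : ι) :
    ((TensorProduct.finsuppScalarRight k k g ι)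
        ((TensorProduct.congr (LinearEquiv.refl k g) b.repr)
          (TensorProduct.map f LinearMap.id t))) i
      = f (((TensorProduct.finsuppScalarRight k k g ι)
        ((TensorProduct.congr (LinearEquiv.refl k g) b.repr) t)) i) := by
  induction t using TensorProduct.induction_on with
  | zero => simp only [map_zero, Finsupp.coe_zero, Pi.zero_apply]
  | tmul a c =>
      rw [TensorProduct.map_tmul, TensorProduct.congr_tmul, TensorProduct.congr_tmul]
      simp only [LinearEquiv.refl_apply, LinearMap.id_apply]
      rw [TensorProduct.finsuppScalarRight_apply_tmul_apply,
        TensorProduct.finsuppScalarRight_apply_tmul_apply, map_smul]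
  | add s t hs ht => simp only [map_add, Finsupp.add_apply, hs, ht]

/-- for a finite-dimensional 2-step nilpotent Lie algebra `n` with center `z`
and a fixed linear complement `W`, every invariant element of `Λ²n` (modelled as an
antisymmetric invariant tensor `ω ∈ n ⊗ n`) has zero component in `Λ²W`, i.e. lies in
`W∧z ⊕ Λ²z` (modelled as `W⊗z + z⊗W + z⊗z`). -/
theorem stmt2 (k n : Type*) [Field k] [CharZero k] [LieRing n] [LieAlgebra k n]
    [FiniteDimensional k n]
    (h2step : ∀ x y : n, ⁅x, y⁆ ∈ LieAlgebra.center k n)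
    (W : Submodule k n)
    (hcompl : IsCompl (LieAlgebra.center k n).toSubmodule W) :
    ∀ ω : n ⊗[k] n, TensorProduct.comm k n n ω = -ω → (∀ x : n, tAct k n x ω = 0) →
      ω ∈ tsub k n W (LieAlgebra.center k n).toSubmodule
          ⊔ tsub k n (LieAlgebra.center k n).toSubmodule W
          ⊔ tsub k n (LieAlgebra.center k n).toSubmodule (LieAlgebra.center k n).toSubmodule := by
  intro ω _hskew hinv
  set z := (LieAlgebra.center k n).toSubmodule with hz
  -- projections onto z and W
  set P : n →ₗ[k] n := z.subtype ∘ₗ (z.projectionOnto W hcompl) with hP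
  set Q : n →ₗ[k] n := LinearMap.id - P with hQ
  have hPmem : ∀ a, P a ∈ z := fun a => (z.projectionOnto W hcompl a).2
  have hPz : ∀ a ∈ z, P a = a := by
    intro a ha
    simp [hP, Submodule.projectionOnto_apply_of_mem_left hcompl ha]
  have hPW : ∀ a ∈ W, P a = 0 := by
    intro a ha
    simpa [hP] using
      congrArg z.subtype (Submodule.projectionOnto_apply_of_mem_right hcompl ha)
  have hQmem : ∀ a, Q a ∈ W := by
    intro a
    have hmem : a ∈ z ⊔ W := by rw [hcompl.sup_eq_top]; trivial
    obtain ⟨az, haz, aw, haw, rfl⟩ := Submodule.mem_sup.mp hmem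
    have : Q (az + aw) = aw := by
      simp only [hQ, LinearMap.sub_apply, LinearMap.id_apply, map_add,
        hPz az haz, hPW aw haw]
      abel
    rw [this]; exact haw
  -- interaction with the adjoint action
  have hcent : ∀ a ∈ z, ∀ x : n, ⁅x, a⁆ = 0 := by
    intro a ha x
    exact (LieModule.mem_maxTrivSubmodule k n n a).mp ha x
  have hPad : ∀ x : n, P ∘ₗ LieAlgebra.ad k n x = LieAlgebra.ad k n x := by
    intro x; ext a
    exact hPz _ (h2step x a)
  have hQad : ∀ x : n, Q ∘ₗ LieAlgebra.ad k n x = 0 := by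
    intro x; ext a
    simp [hQ, hPz _ (h2step x a)]
  have hadP : ∀ x : n, LieAlgebra.ad k n x ∘ₗ P = 0 := by
    intro x; ext a
    simp [hcent _ (hPmem a) x]
  have hadQ : ∀ x : n, LieAlgebra.ad k n x ∘ₗ Q = LieAlgebra.ad k n x := by
    intro x; ext a
    simp [hQ, hcent _ (hPmem a) x]
  have hQQ : Q ∘ₗ Q = Q := by
    ext a
    simp [hQ, hPz _ (hPmem a)]
  -- the Λ²W component of ω is killed by `ad x ⊗ 1`
  have hkey : ∀ x : n, TensorProduct.map (LieAlgebra.ad k n x) LinearMap.id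
      (TensorProduct.map Q Q ω) = 0 := by
    intro x
    have h1 : TensorProduct.map (LieAlgebra.ad k n x) LinearMap.id
        (TensorProduct.map Q Q ω) = TensorProduct.map (LieAlgebra.ad k n x) Q ω := by
      rw [← LinearMap.comp_apply, ← TensorProduct.map_comp, hadQ, LinearMap.id_comp]
    have h2 : TensorProduct.map P Q (tAct k n x ω)
        = TensorProduct.map (LieAlgebra.ad k n x) Q ω := by
      simp only [tAct, LinearMap.add_apply, map_add]
      rw [← LinearMap.comp_apply, ← TensorProduct.map_comp, hPad, LinearMap.comp_id]
      rw [← LinearMap.comp_apply (TensorProduct.map P Q), ← TensorProduct.map_comp,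
        hQad, LinearMap.comp_id]
      have : TensorProduct.map P (0 : n →ₗ[k] n) = 0 := by
        ext a c; simp
      rw [this]
      simp
    rw [h1, ← h2, hinv x, map_zero]
  -- hence that component vanishes
  have hWW : TensorProduct.map Q Q ω = 0 := by
    let b := Module.finBasis k n
    set φ := (TensorProduct.congr (LinearEquiv.refl k n) b.repr).trans
      (TensorProduct.finsuppScalarRight k k n _) with hφ
    have hself : TensorProduct.map Q LinearMap.id (TensorProduct.map Q Q ω)
        = TensorProduct.map Q Q ω := by
      rw [← LinearMap.comp_apply, ← TensorProduct.map_comp, hQQ, LinearMap.id_comp]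
    have : φ (TensorProduct.map Q Q ω) = 0 := by
      ext i
      set c := φ (TensorProduct.map Q Q ω) i with hc
      have hcz : c ∈ z := by
        have hx : ∀ x : n, ⁅x, c⁆ = 0 := by
          intro x
          have := coef_naturality b (LieAlgebra.ad k n x) (TensorProduct.map Q Q ω) i
          rw [hkey x] at this
          simpa [hc, hφ] using this.symm
        exact (LieModule.mem_maxTrivSubmodule k n n c).mpr hx
      have hcw : c ∈ W := by
        have := coef_naturality b Q (TensorProduct.map Q Q ω) i
        rw [hself] at this
        have hQc : Q c = c := by simpa [hc, hφ] using this.symm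
        rw [← hQc]; exact hQmem c
      have : c ∈ z ⊓ W := ⟨hcz, hcw⟩
      rw [hcompl.inf_eq_bot] at this
      simpa [hc] using this
    have := congrArg φ.symm this
    simpa using this
  -- decompose ω and conclude
  have hdecomp : ω = TensorProduct.map Q P ω + TensorProduct.map P Q ω
      + TensorProduct.map P P ω := by
    have hid : TensorProduct.map (P + Q) (P + Q) ω = ω := by
      have : P + Q = LinearMap.id := by rw [hQ]; abel
      rw [this]
      simp [TensorProduct.map_id]
    rw [TensorProduct.map_add_left, TensorProduct.map_add_right,
      TensorProduct.map_add_right] at hid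
    simp only [LinearMap.add_apply] at hid
    rw [hWW, add_zero] at hid
    conv_lhs => rw [← hid]
    abel
  rw [hdecomp]
  refine Submodule.add_mem _ (Submodule.add_mem _ ?_ ?_) ?_
  · exact Submodule.mem_sup_left (Submodule.mem_sup_left
      (mem_tsub_of_range_le hQmem hPmem ω))
  · exact Submodule.mem_sup_left (Submodule.mem_sup_right
      (mem_tsub_of_range_le hPmem hQmem ω))
  · exact Submodule.mem_sup_right (mem_tsub_of_range_le hPmem hPmem ω)
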